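/- Given simulations f : S ⇒ T between automata S, T : X → Y with initial states and g : U ⇒ V between automata U, V : Y → Z with initial states, the componentwise maps (v,w) ↦ (f(v), g(w)) on states and (e,e') ↦ (f(e), g(e')) on motions define a simulation f·g : S·U ⇒ T·V between the bindings (equipped with the pairs of initial states). -/

import Mathlib

/-- An automaton with boundary `S : X → Y`, where the action sets `X`, `Y`
have trivial (reflexive) actions `eX`, `eY`. -/
structure Aut (X Y : Type) (eX : X) (eY : Y) where
  State : Type
  Motion : Type
  src : Motion → State
  tgt : Motion → State
  refl : State → Motion
  refl_src : ∀ v, src (refl v) = v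
  refl_tgt : ∀ v, tgt (refl v) = v
  labL : Motion → X
  labR : Motion → Y
  labL_refl : ∀ v, labL (refl v) = eX
  labR_refl : ∀ v, labR (refl v) = eY

namespace Aut

variable {X Y Z W : Type} {eX : X} {eY : Y} {eZ : Z} {eW : W}

/-- The binding `S·T` of automata `S : X → Y` and `T : Y → Z`. -/
def bind (S : Aut X Y eX eY) (T : Aut Y Z eY eZ) : Aut X Z eX eZ where
  State := S.State × T.State
  Motion := {p : S.Motion × T.Motion // S.labR p.1 = T.labL p.2}
  src p := (S.src p.val.1, T.src p.val.2)
  tgt p := (S.tgt p.val.1, T.tgt p.val.2)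
  refl v := ⟨(S.refl v.1, T.refl v.2), by rw [S.labR_refl, T.labL_refl]⟩
  refl_src v := by simp [S.refl_src, T.refl_src]
  refl_tgt v := by simp [S.refl_tgt, T.refl_tgt]
  labL p := S.labL p.val.1
  labR p := T.labR p.val.2
  labL_refl v := S.labL_refl v.1
  labR_refl v := T.labR_refl v.2

/-- The product `S×T` of automata `S : X → Y` and `T : Z → W`. -/
def prod (S : Aut X Y eX eY) (T : Aut Z W eZ eW) :
    Aut (X × Z) (Y × W) (eX, eZ) (eY, eW) where
  State := S.State × T.State
  Motion := S.Motion × T.Motion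
  src p := (S.src p.1, T.src p.2)
  tgt p := (S.tgt p.1, T.tgt p.2)
  refl v := (S.refl v.1, T.refl v.2)
  refl_src v := by simp [S.refl_src, T.refl_src]
  refl_tgt v := by simp [S.refl_tgt, T.refl_tgt]
  labL p := (S.labL p.1, T.labL p.2)
  labR p := (S.labR p.1, T.labR p.2)
  labL_refl v := by simp [S.labL_refl, T.labL_refl]
  labR_refl v := by simp [S.labR_refl, T.labR_refl]

/-- The feedback `fb_Y S` of an automaton `S : X×Y → Y×Z`. -/
def fb (S : Aut (X × Y) (Y × Z) (eX, eY) (eY, eZ)) : Aut X Z eX eZ where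
  State := S.State
  Motion := {e : S.Motion // (S.labL e).2 = (S.labR e).1}
  src e := S.src e.val
  tgt e := S.tgt e.val
  refl v := ⟨S.refl v, by rw [S.labL_refl, S.labR_refl]⟩
  refl_src v := S.refl_src v
  refl_tgt v := S.refl_tgt v
  labL e := (S.labL e.val).1
  labR e := (S.labR e.val).2
  labL_refl v := by simp [S.labL_refl]
  labR_refl v := by simp [S.labR_refl]

/-- The identity automaton on an action set `X`. -/
def ident (X : Type) (eX : X) : Aut X X eX eX where
  State := PUnit
  Motion := X
  src _ := PUnit.unit
  tgt _ := PUnit.unit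
  refl _ := eX
  refl_src _ := rfl
  refl_tgt _ := rfl
  labL x := x
  labR x := x
  labL_refl _ := rfl
  labR_refl _ := rfl

end Aut

/-- `IsPath A v l w` : the list of motions `l` is a finite behaviour of `A`
from the state `v` ending at the state `w`. -/
def IsPath {X Y : Type} {eX : X} {eY : Y} (A : Aut X Y eX eY) :
    A.State → List A.Motion → A.State → Prop
  | v, [], w => v = w
  | v, e :: l, w => A.src e = v ∧ IsPath A (A.tgt e) l w

/-- `w` is reachable from `v`: there is a finite (possibly empty) behaviour from `v` to `w`. -/
def Reaches {X Y : Type} {eX : X} {eY : Y} (A : Aut X Y eX eY) (v w : A.State) : Prop :=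
  ∃ l, IsPath A v l w

/-- A state is a deadlock if the only motion out of it is the reflexive motion. -/
def Deadlock {X Y : Type} {eX : X} {eY : Y} (A : Aut X Y eX eY) (v : A.State) : Prop :=
  ∀ e, A.src e = v → e = A.refl v

/-- A behaviour (finite or infinite) of `A` from the state `v0`, encoded as a
finite-or-infinite sequence `Stream'.Seq` of motions. -/
def IsBehaviour {X Y : Type} {eX : X} {eY : Y} (A : Aut X Y eX eY) (v0 : A.State)
    (s : Stream'.Seq A.Motion) : Prop :=
  (∀ e, s.get? 0 = some e → A.src e = v0) ∧
  (∀ k e f, s.get? k = some e → s.get? (k + 1) = some f → A.src f = A.tgt e)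

/-- A comparison of automata: maps on states and motions preserving sources,
targets, reflexive motions and boundary labels. -/
structure Comparison {X Y : Type} {eX : X} {eY : Y} (S T : Aut X Y eX eY) where
  onState : S.State → T.State
  onMotion : S.Motion → T.Motion
  src_eq : ∀ e, T.src (onMotion e) = onState (S.src e)
  tgt_eq : ∀ e, T.tgt (onMotion e) = onState (S.tgt e)
  refl_eq : ∀ v, onMotion (S.refl v) = T.refl (onState v)
  labL_eq : ∀ e, T.labL (onMotion e) = S.labL e
  labR_eq : ∀ e, T.labR (onMotion e) = S.labR e

/-- An isomorphism of automata: bijections on states and motions preserving sources,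
targets, reflexive motions and boundary labels. -/
structure AutIso {X Y : Type} {eX : X} {eY : Y} (S T : Aut X Y eX eY) where
  stateEquiv : S.State ≃ T.State
  motionEquiv : S.Motion ≃ T.Motion
  src_eq : ∀ e, T.src (motionEquiv e) = stateEquiv (S.src e)
  tgt_eq : ∀ e, T.tgt (motionEquiv e) = stateEquiv (S.tgt e)
  refl_eq : ∀ v, motionEquiv (S.refl v) = T.refl (stateEquiv v)
  labL_eq : ∀ e, T.labL (motionEquiv e) = S.labL e
  labR_eq : ∀ e, T.labR (motionEquiv e) = S.labR e

/-- The reachable subautomaton `r(A)` of `A` with initial state `v0`. -/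
def reach {X Y : Type} {eX : X} {eY : Y} (A : Aut X Y eX eY) (v0 : A.State) :
    Aut X Y eX eY where
  State := {v : A.State // Reaches A v0 v}
  Motion := {e : A.Motion // Reaches A v0 (A.src e) ∧ Reaches A v0 (A.tgt e)}
  src e := ⟨A.src e.val, e.property.1⟩
  tgt e := ⟨A.tgt e.val, e.property.2⟩
  refl v := ⟨A.refl v.val, by rw [A.refl_src, A.refl_tgt]; exact ⟨v.property, v.property⟩⟩
  refl_src v := Subtype.ext (A.refl_src v.val)
  refl_tgt v := Subtype.ext (A.refl_tgt v.val)
  labL e := A.labL e.val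
  labR e := A.labR e.val
  labL_refl v := A.labL_refl v.val
  labR_refl v := A.labR_refl v.val

/-- The initial state of `A`, as a state of the reachable subautomaton `r(A)`. -/
def reachInit {X Y : Type} {eX : X} {eY : Y} (A : Aut X Y eX eY) (v0 : A.State) :
    (reach A v0).State :=
  ⟨v0, ⟨[], rfl⟩⟩

/-- A simulation `S ⇒ T` of automata with initial states: a comparison
`r(S) → r(T)` preserving the initial state and satisfying the lifting property. -/
structure Simulation {X Y : Type} {eX : X} {eY : Y} (S T : Aut X Y eX eY)
    (v0 : S.State) (w0 : T.State) where
  comp : Comparison (reach S v0) (reach T w0)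
  init : (comp.onState (reachInit S v0)).val = w0
  lift : ∀ (v : (reach S v0).State) (e : (reach T w0).Motion),
      (reach T w0).src e = comp.onState v →
      ∃ (l : List ((reach S v0).Motion)) (e' : (reach S v0).Motion)
        (v' : (reach S v0).State),
        IsPath (reach S v0) v (l ++ [e']) v' ∧
        (∀ m ∈ l, comp.onMotion m = (reach T w0).refl (comp.onState v)) ∧
        comp.onMotion e' = e

section BindSimHelpers

variable {X Y Z : Type} {eX : X} {eY : Y} {eZ : Z}

lemma isPath_append {A : Aut X Y eX eY} :
    ∀ {l1 l2 : List A.Motion} {v u w : A.State},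
      IsPath A v l1 u → IsPath A u l2 w → IsPath A v (l1 ++ l2) w
  | [], _, _, _, _, h1, h2 => by cases h1; exact h2
  | _ :: _, _, _, _, _, h1, h2 => ⟨h1.1, isPath_append h1.2 h2⟩

lemma isPath_append_split {A : Aut X Y eX eY} :
    ∀ {l1 l2 : List A.Motion} {v w : A.State},
      IsPath A v (l1 ++ l2) w → ∃ u, IsPath A v l1 u ∧ IsPath A u l2 w
  | [], _, v, _, h => ⟨v, rfl, h⟩
  | _ :: _, _, _, _, h =>
    let ⟨u, h1, h2⟩ := isPath_append_split h.2
    ⟨u, ⟨h.1, h1⟩, h2⟩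

lemma reaches_snoc {A : Aut X Y eX eY} {a b : A.State} (h : Reaches A a b)
    (e : A.Motion) (he : A.src e = b) : Reaches A a (A.tgt e) := by
  obtain ⟨l, hl⟩ := h
  exact ⟨l ++ [e], isPath_append hl ⟨he, rfl⟩⟩

lemma isPath_bind_fst {S : Aut X Y eX eY} {U : Aut Y Z eY eZ} :
    ∀ {l : List (S.bind U).Motion} {p q : (S.bind U).State},
      IsPath (S.bind U) p l q → IsPath S p.1 (l.map (fun m => m.val.1)) q.1
  | [], _, _, h => congrArg Prod.fst h
  | _ :: _, _, _, h => ⟨congrArg Prod.fst h.1, isPath_bind_fst h.2⟩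

lemma isPath_bind_snd {S : Aut X Y eX eY} {U : Aut Y Z eY eZ} :
    ∀ {l : List (S.bind U).Motion} {p q : (S.bind U).State},
      IsPath (S.bind U) p l q → IsPath U p.2 (l.map (fun m => m.val.2)) q.2
  | [], _, _, h => congrArg Prod.snd h
  | _ :: _, _, _, h => ⟨congrArg Prod.snd h.1, isPath_bind_snd h.2⟩

lemma reaches_bind_fst {S : Aut X Y eX eY} {U : Aut Y Z eY eZ}
    {p q : (S.bind U).State} (h : Reaches (S.bind U) p q) : Reaches S p.1 q.1 := by
  obtain ⟨l, hl⟩ := h; exact ⟨_, isPath_bind_fst hl⟩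

lemma reaches_bind_snd {S : Aut X Y eX eY} {U : Aut Y Z eY eZ}
    {p q : (S.bind U).State} (h : Reaches (S.bind U) p q) : Reaches U p.2 q.2 := by
  obtain ⟨l, hl⟩ := h; exact ⟨_, isPath_bind_snd hl⟩

/-- If all motions of a path are mapped to the reflexive motion at `c`, then the image of
every state along the path (given the image of the start is `c`) is `c`. -/
lemma comparison_onState_const {A B : Aut X Y eX eY} (C : Comparison A B) {c : B.State} :
    ∀ {l : List A.Motion} {s s' : A.State},
      IsPath A s l s' → (∀ m ∈ l, C.onMotion m = B.refl c) →
      C.onState s = c → C.onState s' = c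
  | [], s, s', h, _, hc => h ▸ hc
  | m :: l, s, s', h, hr, hc =>
    comparison_onState_const C h.2 (fun m hm => hr m (List.mem_cons_of_mem _ hm))
      (by rw [← C.tgt_eq, hr m (List.mem_cons_self), B.refl_tgt])

end BindSimHelpers

section BindSimCore

variable {X Y Z : Type} {eX : X} {eY : Y} {eZ : Z}
variable {S T : Aut X Y eX eY} {U V : Aut Y Z eY eZ}
variable {v0 : S.State} {w0 : T.State} {u0 : U.State} {x0 : V.State}

/-- The image of a state of `S·U` (reachable componentwise) under the pair of simulations. -/
def imgSt (f : Simulation S T v0 w0) (g : Simulation U V u0 x0)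
    (p : (S.bind U).State) (h1 : Reaches S v0 p.1) (h2 : Reaches U u0 p.2) :
    (T.bind V).State :=
  ((f.comp.onState ⟨p.1, h1⟩).val, (g.comp.onState ⟨p.2, h2⟩).val)

lemma reaches_img (f : Simulation S T v0 w0) (g : Simulation U V u0 x0) :
    ∀ (l : List (S.bind U).Motion) (p q : (S.bind U).State),
      IsPath (S.bind U) p l q →
      ∀ (hp1 : Reaches S v0 p.1) (hp2 : Reaches U u0 p.2),
      Reaches (T.bind V) (w0, x0) (imgSt f g p hp1 hp2) →
      ∀ (hq1 : Reaches S v0 q.1) (hq2 : Reaches U u0 q.2),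
      Reaches (T.bind V) (w0, x0) (imgSt f g q hq1 hq2)
  | [] => fun p q h hp1 hp2 hr hq1 hq2 => by subst h; exact hr
  | e :: l => fun p q h hp1 hp2 hr hq1 hq2 => by
    have hs1 : S.src e.val.1 = p.1 := congrArg Prod.fst h.1
    have hs2 : U.src e.val.2 = p.2 := congrArg Prod.snd h.1
    have hrs1 : Reaches S v0 (S.src e.val.1) := hs1 ▸ hp1
    have hrs2 : Reaches U u0 (U.src e.val.2) := hs2 ▸ hp2
    have hrt1 : Reaches S v0 (S.tgt e.val.1) := reaches_snoc hp1 _ hs1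
    have hrt2 : Reaches U u0 (U.tgt e.val.2) := reaches_snoc hp2 _ hs2
    let E1 : (reach S v0).Motion := ⟨e.val.1, hrs1, hrt1⟩
    let E2 : (reach U u0).Motion := ⟨e.val.2, hrs2, hrt2⟩
    have hlab : T.labR (f.comp.onMotion E1).val = V.labL (g.comp.onMotion E2).val := by
      have h1 := f.comp.labR_eq E1
      have h2 := g.comp.labL_eq E2
      simp only [reach] at h1 h2
      rw [h1, h2]; exact e.property
    let M : (T.bind V).Motion := ⟨((f.comp.onMotion E1).val, (g.comp.onMotion E2).val), hlab⟩
    have hsrcM : (T.bind V).src M = imgSt f g p hp1 hp2 := by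
      have h1 := congrArg Subtype.val (f.comp.src_eq E1)
      have h2 := congrArg Subtype.val (g.comp.src_eq E2)
      refine Prod.ext ?_ ?_
      · exact h1.trans (congrArg (fun s => (f.comp.onState s).val) (Subtype.ext hs1))
      · exact h2.trans (congrArg (fun s => (g.comp.onState s).val) (Subtype.ext hs2))
    have htgtM : (T.bind V).tgt M = imgSt f g ((S.bind U).tgt e) hrt1 hrt2 := by
      have h1 := congrArg Subtype.val (f.comp.tgt_eq E1)
      have h2 := congrArg Subtype.val (g.comp.tgt_eq E2)
      exact Prod.ext h1 h2
    have hr' : Reaches (T.bind V) (w0, x0) (imgSt f g ((S.bind U).tgt e) hrt1 hrt2) :=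
      htgtM ▸ reaches_snoc hr M hsrcM
    exact reaches_img f g l _ q h.2 hrt1 hrt2 hr' hq1 hq2

lemma imgSt_init (f : Simulation S T v0 w0) (g : Simulation U V u0 x0)
    (h1 : Reaches S v0 v0) (h2 : Reaches U u0 u0) :
    imgSt f g (v0, u0) h1 h2 = (w0, x0) :=
  Prod.ext f.init g.init

lemma reaches_img' (f : Simulation S T v0 w0) (g : Simulation U V u0 x0)
    (q : (S.bind U).State) (hq : Reaches (S.bind U) (v0, u0) q)
    (hq1 : Reaches S v0 q.1) (hq2 : Reaches U u0 q.2) :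
    Reaches (T.bind V) (w0, x0) (imgSt f g q hq1 hq2) := by
  obtain ⟨l, hl⟩ := hq
  exact reaches_img f g l _ q hl ⟨[], rfl⟩ ⟨[], rfl⟩
    ⟨[], (imgSt_init f g _ _).symm⟩ hq1 hq2

/-- The comparison `r(S·U) → r(T·V)` induced by a pair of simulations. -/
def bindComp (f : Simulation S T v0 w0) (g : Simulation U V u0 x0) :
    Comparison (reach (S.bind U) (v0, u0)) (reach (T.bind V) (w0, x0)) where
  onState q := ⟨imgSt f g q.val (reaches_bind_fst q.2) (reaches_bind_snd q.2),
    reaches_img' f g q.val q.2 _ _⟩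
  onMotion m :=
    let E1 : (reach S v0).Motion :=
      ⟨m.val.val.1, reaches_bind_fst m.2.1, reaches_bind_fst m.2.2⟩
    let E2 : (reach U u0).Motion :=
      ⟨m.val.val.2, reaches_bind_snd m.2.1, reaches_bind_snd m.2.2⟩
    ⟨⟨((f.comp.onMotion E1).val, (g.comp.onMotion E2).val), by
        have h1 := f.comp.labR_eq E1
        have h2 := g.comp.labL_eq E2
        simp only [reach] at h1 h2
        show T.labR _ = V.labL _
        rw [h1, h2]; exact m.val.property⟩,
      by
        show Reaches (T.bind V) (w0, x0)
          ((T.src (f.comp.onMotion E1).val, V.src (g.comp.onMotion E2).val))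
        have h1 := congrArg Subtype.val (f.comp.src_eq E1)
        have h2 := congrArg Subtype.val (g.comp.src_eq E2)
        rw [show ((T.src (f.comp.onMotion E1).val, V.src (g.comp.onMotion E2).val))
            = imgSt f g ((S.bind U).src m.val)
              (reaches_bind_fst m.2.1) (reaches_bind_snd m.2.1) from Prod.ext h1 h2]
        exact reaches_img' f g _ m.2.1 _ _,
      by
        show Reaches (T.bind V) (w0, x0)
          ((T.tgt (f.comp.onMotion E1).val, V.tgt (g.comp.onMotion E2).val))
        have h1 := congrArg Subtype.val (f.comp.tgt_eq E1)
        have h2 := congrArg Subtype.val (g.comp.tgt_eq E2)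
        rw [show ((T.tgt (f.comp.onMotion E1).val, V.tgt (g.comp.onMotion E2).val))
            = imgSt f g ((S.bind U).tgt m.val)
              (reaches_bind_fst m.2.2) (reaches_bind_snd m.2.2) from Prod.ext h1 h2]
        exact reaches_img' f g _ m.2.2 _ _⟩
  src_eq m := Subtype.ext (Prod.ext
    (congrArg Subtype.val (f.comp.src_eq _)) (congrArg Subtype.val (g.comp.src_eq _)))
  tgt_eq m := Subtype.ext (Prod.ext
    (congrArg Subtype.val (f.comp.tgt_eq _)) (congrArg Subtype.val (g.comp.tgt_eq _)))
  refl_eq q := Subtype.ext (Subtype.ext (Prod.ext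
    (congrArg Subtype.val (f.comp.refl_eq ⟨q.val.1, reaches_bind_fst q.2⟩))
    (congrArg Subtype.val (g.comp.refl_eq ⟨q.val.2, reaches_bind_snd q.2⟩))))
  labL_eq m := f.comp.labL_eq _
  labR_eq m := g.comp.labR_eq _

end BindSimCore

section BindSimStutter

variable {X Y Z : Type} {eX : X} {eY : Y} {eZ : Z}
variable {S : Aut X Y eX eY} {U : Aut Y Z eY eZ}
variable {v0 : S.State} {u0 : U.State}

lemma stutter_fst :
    ∀ (l : List ((reach S v0).Motion)) (s s' : (reach S v0).State) (u : U.State)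
      (hp : Reaches (S.bind U) (v0, u0) (s.val, u)),
      IsPath (reach S v0) s l s' →
      (∀ m ∈ l, S.labR m.val = eY) →
      ∃ (hp' : Reaches (S.bind U) (v0, u0) (s'.val, u))
        (L : List ((reach (S.bind U) (v0, u0)).Motion)),
        IsPath (reach (S.bind U) (v0, u0)) ⟨(s.val, u), hp⟩ L ⟨(s'.val, u), hp'⟩ ∧
        ∀ M ∈ L, (∃ m ∈ l, M.val.val.1 = m.val) ∧ M.val.val.2 = U.refl u
  | [], s, s', u, hp, h, _ => by
    cases h
    exact ⟨hp, [], rfl, by simp⟩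
  | m :: l, s, s', u, hp, h, hlab => by
    have hlabm : S.labR m.val = U.labL (U.refl u) := by
      rw [U.labL_refl]; exact hlab m (List.mem_cons_self)
    let Mval : (S.bind U).Motion := ⟨(m.val, U.refl u), hlabm⟩
    have hsrc : (S.bind U).src Mval = (s.val, u) :=
      Prod.ext (congrArg Subtype.val h.1) (U.refl_src u)
    have htgt : (S.bind U).tgt Mval = (((reach S v0).tgt m).val, u) :=
      Prod.ext rfl (U.refl_tgt u)
    have hpM : Reaches (S.bind U) (v0, u0) ((S.bind U).src Mval) := by rw [hsrc]; exact hp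
    have htR : Reaches (S.bind U) (v0, u0) ((S.bind U).tgt Mval) := reaches_snoc hp Mval hsrc
    have hp2 : Reaches (S.bind U) (v0, u0) ((((reach S v0).tgt m).val, u)) := htgt ▸ htR
    obtain ⟨hp', L, hL, hprop⟩ := stutter_fst l ((reach S v0).tgt m) s' u hp2 h.2
      (fun m' hm' => hlab m' (List.mem_cons_of_mem _ hm'))
    refine ⟨hp', ⟨Mval, hpM, htR⟩ :: L, ⟨Subtype.ext hsrc, ?_⟩, ?_⟩
    · have : ((reach (S.bind U) (v0, u0)).tgt ⟨Mval, hpM, htR⟩)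
          = (⟨(((reach S v0).tgt m).val, u), hp2⟩ : (reach (S.bind U) (v0, u0)).State) :=
        Subtype.ext htgt
      rw [this]; exact hL
    · intro M hM
      rcases List.mem_cons.1 hM with rfl | hM
      · exact ⟨⟨m, List.mem_cons_self, rfl⟩, rfl⟩
      · obtain ⟨⟨m', hm', he⟩, h2⟩ := hprop M hM
        exact ⟨⟨m', List.mem_cons_of_mem _ hm', he⟩, h2⟩

lemma stutter_snd :
    ∀ (l : List ((reach U u0).Motion)) (s s' : (reach U u0).State) (v : S.State)
      (hp : Reaches (S.bind U) (v0, u0) (v, s.val)),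
      IsPath (reach U u0) s l s' →
      (∀ m ∈ l, U.labL m.val = eY) →
      ∃ (hp' : Reaches (S.bind U) (v0, u0) (v, s'.val))
        (L : List ((reach (S.bind U) (v0, u0)).Motion)),
        IsPath (reach (S.bind U) (v0, u0)) ⟨(v, s.val), hp⟩ L ⟨(v, s'.val), hp'⟩ ∧
        ∀ M ∈ L, M.val.val.1 = S.refl v ∧ (∃ m ∈ l, M.val.val.2 = m.val)
  | [], s, s', v, hp, h, _ => by
    cases h
    exact ⟨hp, [], rfl, by simp⟩
  | m :: l, s, s', v, hp, h, hlab => by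
    have hlabm : S.labR (S.refl v) = U.labL m.val := by
      rw [S.labR_refl]; exact (hlab m (List.mem_cons_self)).symm
    let Mval : (S.bind U).Motion := ⟨(S.refl v, m.val), hlabm⟩
    have hsrc : (S.bind U).src Mval = (v, s.val) :=
      Prod.ext (S.refl_src v) (congrArg Subtype.val h.1)
    have htgt : (S.bind U).tgt Mval = (v, ((reach U u0).tgt m).val) :=
      Prod.ext (S.refl_tgt v) rfl
    have hpM : Reaches (S.bind U) (v0, u0) ((S.bind U).src Mval) := by rw [hsrc]; exact hp
    have htR : Reaches (S.bind U) (v0, u0) ((S.bind U).tgt Mval) := reaches_snoc hp Mval hsrc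
    have hp2 : Reaches (S.bind U) (v0, u0) ((v, ((reach U u0).tgt m).val)) := htgt ▸ htR
    obtain ⟨hp', L, hL, hprop⟩ := stutter_snd l ((reach U u0).tgt m) s' v hp2 h.2
      (fun m' hm' => hlab m' (List.mem_cons_of_mem _ hm'))
    refine ⟨hp', ⟨Mval, hpM, htR⟩ :: L, ⟨Subtype.ext hsrc, ?_⟩, ?_⟩
    · have : ((reach (S.bind U) (v0, u0)).tgt ⟨Mval, hpM, htR⟩)
          = (⟨(v, ((reach U u0).tgt m).val), hp2⟩ : (reach (S.bind U) (v0, u0)).State) :=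
        Subtype.ext htgt
      rw [this]; exact hL
    · intro M hM
      rcases List.mem_cons.1 hM with rfl | hM
      · exact ⟨rfl, ⟨m, List.mem_cons_self, rfl⟩⟩
      · obtain ⟨h1, ⟨m', hm', he⟩⟩ := hprop M hM
        exact ⟨h1, ⟨m', List.mem_cons_of_mem _ hm', he⟩⟩

end BindSimStutter

section BindSimFinal

variable {X Y Z : Type} {eX : X} {eY : Y} {eZ : Z}
variable {S T : Aut X Y eX eY} {U V : Aut Y Z eY eZ}
variable {v0 : S.State} {w0 : T.State} {u0 : U.State} {x0 : V.State}

/-- The simulation `f·g : S·U ⇒ T·V` induced by simulations `f : S ⇒ T`, `g : U ⇒ V`. -/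
def bindSim (f : Simulation S T v0 w0) (g : Simulation U V u0 x0) :
    Simulation (S.bind U) (T.bind V) (v0, u0) (w0, x0) where
  comp := bindComp f g
  init := Prod.ext f.init g.init
  lift := by
    intro q E hsrcE
    set q1 : (reach S v0).State := ⟨q.val.1, reaches_bind_fst q.2⟩ with hq1def
    set q2 : (reach U u0).State := ⟨q.val.2, reaches_bind_snd q.2⟩ with hq2def
    let A : (reach T w0).Motion :=
      ⟨E.val.val.1, reaches_bind_fst E.2.1, reaches_bind_fst E.2.2⟩
    let B : (reach V x0).Motion :=
      ⟨E.val.val.2, reaches_bind_snd E.2.1, reaches_bind_snd E.2.2⟩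
    have hsA : (reach T w0).src A = f.comp.onState q1 :=
      Subtype.ext (congrArg (fun p => p.val.1) hsrcE)
    have hsB : (reach V x0).src B = g.comp.onState q2 :=
      Subtype.ext (congrArg (fun p => p.val.2) hsrcE)
    obtain ⟨l1, e1, v1, hp1, hrefl1, heq1⟩ := f.lift q1 A hsA
    obtain ⟨l2, e2, v2, hp2, hrefl2, heq2⟩ := g.lift q2 B hsB
    obtain ⟨s1, hl1, he1⟩ := isPath_append_split hp1
    obtain ⟨s2, hl2, he2⟩ := isPath_append_split hp2
    have hlab1 : ∀ m ∈ l1, S.labR m.val = eY := by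
      intro m hm
      have h1 := f.comp.labR_eq m
      rw [hrefl1 m hm] at h1
      have h2 : (reach T w0).labR ((reach T w0).refl (f.comp.onState q1)) = eY :=
        (reach T w0).labR_refl _
      exact (h1.symm.trans h2 : (reach S v0).labR m = eY)
    have hlab2 : ∀ m ∈ l2, U.labL m.val = eY := by
      intro m hm
      have h1 := g.comp.labL_eq m
      rw [hrefl2 m hm] at h1
      have h2 : (reach V x0).labL ((reach V x0).refl (g.comp.onState q2)) = eY :=
        (reach V x0).labL_refl _
      exact (h1.symm.trans h2 : (reach U u0).labL m = eY)
    obtain ⟨hpA, L1, hL1, hprop1⟩ := stutter_fst l1 q1 s1 q.val.2 q.2 hl1 hlab1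
    obtain ⟨hpB, L2, hL2, hprop2⟩ := stutter_snd l2 q2 s2 s1.val hpA hl2 hlab2
    have hlabE : S.labR e1.val = U.labL e2.val := by
      have h1 := f.comp.labR_eq e1
      have h2 := g.comp.labL_eq e2
      rw [heq1] at h1
      rw [heq2] at h2
      exact (h1.symm.trans (E.val.property.trans h2) :
        (reach S v0).labR e1 = (reach U u0).labL e2)
    have hsrcEval : (S.bind U).src (⟨(e1.val, e2.val), hlabE⟩ : (S.bind U).Motion)
        = (s1.val, s2.val) :=
      Prod.ext (congrArg Subtype.val he1.1) (congrArg Subtype.val he2.1)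
    have hsR : Reaches (S.bind U) (v0, u0)
        ((S.bind U).src (⟨(e1.val, e2.val), hlabE⟩ : (S.bind U).Motion)) := by
      rw [hsrcEval]; exact hpB
    have htRE : Reaches (S.bind U) (v0, u0)
        ((S.bind U).tgt (⟨(e1.val, e2.val), hlabE⟩ : (S.bind U).Motion)) :=
      reaches_snoc hpB _ hsrcEval
    refine ⟨L1 ++ L2, ⟨⟨(e1.val, e2.val), hlabE⟩, hsR, htRE⟩,
      ⟨(S.bind U).tgt (⟨(e1.val, e2.val), hlabE⟩ : (S.bind U).Motion), htRE⟩, ?_, ?_, ?_⟩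
    · refine isPath_append (isPath_append hL1 hL2) ⟨Subtype.ext hsrcEval, rfl⟩
    · intro M hM
      rcases List.mem_append.1 hM with hM | hM
      · obtain ⟨⟨m, hm, hMe⟩, hM2⟩ := hprop1 M hM
        refine Subtype.ext (Subtype.ext (Prod.ext ?_ ?_))
        · have h1 : (f.comp.onMotion (⟨M.val.val.1, reaches_bind_fst M.2.1,
              reaches_bind_fst M.2.2⟩ : (reach S v0).Motion)).val
              = (f.comp.onMotion m).val :=
            congrArg (fun x => (f.comp.onMotion x).val) (Subtype.ext hMe)
          rw [hrefl1 m hm] at h1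
          exact h1
        · have h1 : (g.comp.onMotion (⟨M.val.val.2, reaches_bind_snd M.2.1,
              reaches_bind_snd M.2.2⟩ : (reach U u0).Motion)).val
              = (g.comp.onMotion ((reach U u0).refl q2)).val :=
            congrArg (fun x => (g.comp.onMotion x).val) (Subtype.ext hM2)
          rw [g.comp.refl_eq q2] at h1
          exact h1
      · obtain ⟨hM1, ⟨m, hm, hMe⟩⟩ := hprop2 M hM
        have hconst : f.comp.onState s1 = f.comp.onState q1 :=
          comparison_onState_const f.comp hl1 hrefl1 rfl
        refine Subtype.ext (Subtype.ext (Prod.ext ?_ ?_))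
        · have h1 : (f.comp.onMotion (⟨M.val.val.1, reaches_bind_fst M.2.1,
              reaches_bind_fst M.2.2⟩ : (reach S v0).Motion)).val
              = (f.comp.onMotion ((reach S v0).refl s1)).val :=
            congrArg (fun x => (f.comp.onMotion x).val) (Subtype.ext hM1)
          rw [f.comp.refl_eq s1, hconst] at h1
          exact h1
        · have h1 : (g.comp.onMotion (⟨M.val.val.2, reaches_bind_snd M.2.1,
              reaches_bind_snd M.2.2⟩ : (reach U u0).Motion)).val
              = (g.comp.onMotion m).val :=
            congrArg (fun x => (g.comp.onMotion x).val) (Subtype.ext hMe)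
          rw [hrefl2 m hm] at h1
          exact h1
    · refine Subtype.ext (Subtype.ext (Prod.ext ?_ ?_))
      · exact congrArg Subtype.val heq1
      · exact congrArg Subtype.val heq2

end BindSimFinal

/-- The componentwise maps of simulations `f : S ⇒ T` and `g : U ⇒ V`
define a simulation `f·g : S·U ⇒ T·V` between the bindings, equipped with the pairs of
initial states. -/
theorem simulation_bind {X Y Z : Type} {eX : X} {eY : Y} {eZ : Z}
    (S T : Aut X Y eX eY) (U V : Aut Y Z eY eZ)
    (v0 : S.State) (w0 : T.State) (u0 : U.State) (x0 : V.State)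
    (f : Simulation S T v0 w0) (g : Simulation U V u0 x0) :
    ∃ h : Simulation (S.bind U) (T.bind V) (v0, u0) (w0, x0),
      (∀ (q : (reach (S.bind U) (v0, u0)).State)
        (h1 : Reaches S v0 q.val.1) (h2 : Reaches U u0 q.val.2),
        (h.comp.onState q).val =
          ((f.comp.onState ⟨q.val.1, h1⟩).val, (g.comp.onState ⟨q.val.2, h2⟩).val)) ∧
      (∀ (m : (reach (S.bind U) (v0, u0)).Motion)
        (h1 : Reaches S v0 (S.src m.val.val.1) ∧ Reaches S v0 (S.tgt m.val.val.1))
        (h2 : Reaches U u0 (U.src m.val.val.2) ∧ Reaches U u0 (U.tgt m.val.val.2)),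
        ((h.comp.onMotion m).val).val =
          ((f.comp.onMotion ⟨m.val.val.1, h1⟩).val, (g.comp.onMotion ⟨m.val.val.2, h2⟩).val)) := by
  exact ⟨bindSim f g, fun q h1 h2 => rfl, fun m h1 h2 => rfl⟩
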